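/- Let R_a > 0, R > 0, and let C ∈ (0,1] be a constant such that ‖v‖₂ ≤ C·‖∇v‖₂ for every C¹ function v on the closure of Ω vanishing on ∂Ω. Let ψ, θ be C² functions on the closure of Ω vanishing on ∂Ω that solve −Δψ − R_a·∂ₓθ = f₁ and J(ψ,θ) = Δθ + f₂ pointwise on Ω for continuous f₁, f₂, and satisfy |∂ₓψ| ≤ R/√2, |∂_yψ| ≤ R/√2, |∂ₓθ| ≤ R/√2, |∂_yθ| ≤ R/√2 on Ω. If L := min{1/2 − C·R/(2√2) − C·R_a/2, 1/2 − R_a/2 − 3·R·C/(2√2)} > 0, then ‖∇ψ‖₂² + ‖∇θ‖₂² ≤ (C²/(2L))·(‖f₁‖₂² + ‖f₂‖₂²). -/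

import Mathlib

open MeasureTheory Real Set Filter

noncomputable section

/-- The open unit square Ω = (0,1) × (0,1) in ℝ². -/
def Omg : Set (ℝ × ℝ) := Ioo (0:ℝ) 1 ×ˢ Ioo (0:ℝ) 1

/-- Partial derivative in the x-direction. -/
def px (f : ℝ × ℝ → ℝ) (p : ℝ × ℝ) : ℝ := fderiv ℝ f p (1, 0)

/-- Partial derivative in the y-direction. -/
def py (f : ℝ × ℝ → ℝ) (p : ℝ × ℝ) : ℝ := fderiv ℝ f p (0, 1)

/-- Laplacian. -/
def lap (f : ℝ × ℝ → ℝ) (p : ℝ × ℝ) : ℝ := px (px f) p + py (py f) p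

/-- Jacobian determinant J(ψ,θ) = ∂ₓψ·∂_yθ − ∂_yψ·∂ₓθ. -/
def Jac (ψ θ : ℝ × ℝ → ℝ) (p : ℝ × ℝ) : ℝ := px ψ p * py θ p - py ψ p * px θ p

/-- The L^q norm over Ω: ‖f‖_q = (∫_Ω |f|^q)^(1/q). -/
def Lnorm (f : ℝ × ℝ → ℝ) (q : ℝ) : ℝ := (∫ p in Omg, |f p| ^ q) ^ (1 / q)

/-- ‖∇f‖₂ = (∫_Ω (|∂ₓf|² + |∂_yf|²))^(1/2). -/
def gradNorm (f : ℝ × ℝ → ℝ) : ℝ :=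
  (∫ p in Omg, (|px f p| ^ 2 + |py f p| ^ 2)) ^ ((1:ℝ) / 2)

-- within-derivatives
def dx (f : ℝ × ℝ → ℝ) (p : ℝ × ℝ) : ℝ := fderivWithin ℝ f (closure Omg) p (1, 0)
def dy (f : ℝ × ℝ → ℝ) (p : ℝ × ℝ) : ℝ := fderivWithin ℝ f (closure Omg) p (0, 1)

lemma isOpen_Omg : IsOpen Omg := (isOpen_Ioo).prod isOpen_Ioo
lemma measurableSet_Omg : MeasurableSet Omg := isOpen_Omg.measurableSet

lemma closure_Omg : closure Omg = Icc ((0,0) : ℝ × ℝ) (1,1) := by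
  rw [Omg, closure_prod_eq, closure_Ioo (by norm_num : (0:ℝ) ≠ 1), Icc_prod_eq]

lemma isCompact_closure_Omg : IsCompact (closure Omg) := by
  rw [closure_Omg]; exact isCompact_Icc

lemma uniqueDiffOn_closure_Omg : UniqueDiffOn ℝ (closure Omg) := by
  refine uniqueDiffOn_convex (closure_Omg ▸ convex_Icc _ _) ?_
  refine ⟨((1:ℝ)/2, (1:ℝ)/2), ?_⟩
  have : Omg ⊆ interior (closure Omg) :=
    interior_maximal subset_closure isOpen_Omg
  exact this (by constructor <;> constructor <;> norm_num)

lemma Omg_subset_closure : Omg ⊆ closure Omg := subset_closure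

lemma interior_closure_Omg : interior (closure Omg) = Omg := by
  rw [closure_Omg, Icc_prod_eq, interior_prod_eq]
  simp [Omg]

lemma mem_frontier_Omg {p : ℝ × ℝ} (hp : p ∈ closure Omg) (hp2 : p ∉ Omg) :
    p ∈ frontier Omg := by
  rw [frontier, isOpen_Omg.interior_eq]
  exact ⟨hp, hp2⟩

lemma nhds_closure {p : ℝ × ℝ} (hp : p ∈ Omg) : closure Omg ∈ nhds p :=
  Filter.mem_of_superset (isOpen_Omg.mem_nhds hp) subset_closure

lemma px_eq {f : ℝ × ℝ → ℝ} {p : ℝ × ℝ} (hp : p ∈ Omg) : px f p = dx f p := by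
  rw [px, dx, fderivWithin_of_mem_nhds (nhds_closure hp)]

lemma py_eq {f : ℝ × ℝ → ℝ} {p : ℝ × ℝ} (hp : p ∈ Omg) : py f p = dy f p := by
  rw [py, dy, fderivWithin_of_mem_nhds (nhds_closure hp)]

lemma volume_Icc_diff_Omg : volume (Icc ((0,0) : ℝ × ℝ) (1,1) \ Omg) = 0 := by
  have h1 : Icc ((0,0) : ℝ × ℝ) (1,1) \ Omg ⊆
      (({0,1} : Set ℝ) ×ˢ (univ : Set ℝ)) ∪ ((univ : Set ℝ) ×ˢ ({0,1} : Set ℝ)) := by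
    rintro ⟨x, y⟩ ⟨hmem, hnot⟩
    rw [Icc_prod_eq] at hmem
    obtain ⟨hx, hy⟩ := hmem
    simp only [Omg, mem_prod, mem_Ioo, not_and_or, not_and, not_lt] at hnot
    rcases hnot with h | h
    · refine Or.inl ⟨?_, trivial⟩
      rcases h with h | h
      · exact Or.inl (le_antisymm h hx.1)
      · exact Or.inr (le_antisymm hx.2 h)
    · refine Or.inr ⟨trivial, ?_⟩
      rcases h with h | h
      · exact Or.inl (le_antisymm h hy.1)
      · exact Or.inr (le_antisymm hy.2 h)
  refine measure_mono_null h1 ?_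
  have hfin : (({0,1} : Set ℝ)).Finite := by simp
  refine measure_union_null ?_ ?_ <;>
    rw [Measure.volume_eq_prod, Measure.prod_prod] <;>
    simp [hfin.measure_zero]

lemma Omg_ae_Icc : Omg =ᵐ[volume] Icc ((0,0) : ℝ × ℝ) (1,1) := by
  refine MeasureTheory.ae_eq_set.mpr ⟨?_, volume_Icc_diff_Omg⟩
  have h : Omg \ Icc ((0,0) : ℝ × ℝ) (1,1) = ∅ :=
    diff_eq_empty.mpr (closure_Omg ▸ subset_closure)
  rw [h]; simp

lemma setInt_Icc_eq (h : ℝ × ℝ → ℝ) :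
    ∫ p in Icc ((0,0) : ℝ × ℝ) (1,1), h p = ∫ p in Omg, h p :=
  setIntegral_congr_set Omg_ae_Icc.symm

lemma integrableOn_Omg {u : ℝ × ℝ → ℝ} (hu : ContinuousOn u (closure Omg)) :
    IntegrableOn u Omg volume :=
  (hu.integrableOn_compact isCompact_closure_Omg).mono_set subset_closure

lemma contDiffOn_dx {f : ℝ × ℝ → ℝ} (hf : ContDiffOn ℝ 2 f (closure Omg)) :
    ContDiffOn ℝ 1 (dx f) (closure Omg) :=
  (hf.fderivWithin uniqueDiffOn_closure_Omg (by norm_num)).clm_apply contDiffOn_const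

lemma contDiffOn_dy {f : ℝ × ℝ → ℝ} (hf : ContDiffOn ℝ 2 f (closure Omg)) :
    ContDiffOn ℝ 1 (dy f) (closure Omg) :=
  (hf.fderivWithin uniqueDiffOn_closure_Omg (by norm_num)).clm_apply contDiffOn_const

lemma ev_px_dx {f : ℝ × ℝ → ℝ} {p : ℝ × ℝ} (hp : p ∈ Omg) :
    (fun q => fderiv ℝ f q (1,0)) =ᶠ[nhds p] dx f := by
  filter_upwards [isOpen_Omg.mem_nhds hp] with q hq
  exact (px_eq (f := f) hq)

lemma ev_py_dy {f : ℝ × ℝ → ℝ} {p : ℝ × ℝ} (hp : p ∈ Omg) :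
    (fun q => fderiv ℝ f q (0,1)) =ᶠ[nhds p] dy f := by
  filter_upwards [isOpen_Omg.mem_nhds hp] with q hq
  exact (py_eq (f := f) hq)

lemma diffAt_dx {f : ℝ × ℝ → ℝ} (hf : ContDiffOn ℝ 2 f (closure Omg)) {p : ℝ × ℝ}
    (hp : p ∈ Omg) : DifferentiableAt ℝ (dx f) p := by
  have hC : ContDiffAt ℝ 2 f p := hf.contDiffAt (nhds_closure hp)
  have h1 : ContDiffAt ℝ 1 (fderiv ℝ f) p := hC.fderiv_right (by norm_num)
  have h2 : DifferentiableAt ℝ (fun q => fderiv ℝ f q (1,0)) p :=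
    (h1.clm_apply contDiffAt_const).differentiableAt one_ne_zero
  exact (Filter.EventuallyEq.differentiableAt_iff (ev_px_dx hp)).mp h2

lemma diffAt_dy {f : ℝ × ℝ → ℝ} (hf : ContDiffOn ℝ 2 f (closure Omg)) {p : ℝ × ℝ}
    (hp : p ∈ Omg) : DifferentiableAt ℝ (dy f) p := by
  have hC : ContDiffAt ℝ 2 f p := hf.contDiffAt (nhds_closure hp)
  have h1 : ContDiffAt ℝ 1 (fderiv ℝ f) p := hC.fderiv_right (by norm_num)
  have h2 : DifferentiableAt ℝ (fun q => fderiv ℝ f q (0,1)) p :=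
    (h1.clm_apply contDiffAt_const).differentiableAt one_ne_zero
  exact (Filter.EventuallyEq.differentiableAt_iff (ev_py_dy hp)).mp h2

lemma hasFDerivAt_dx {f : ℝ × ℝ → ℝ} (hf : ContDiffOn ℝ 2 f (closure Omg)) {p : ℝ × ℝ}
    (hp : p ∈ Omg) :
    HasFDerivAt (dx f) (fderivWithin ℝ (dx f) (closure Omg) p) p := by
  rw [fderivWithin_of_mem_nhds (nhds_closure hp)]
  exact (diffAt_dx hf hp).hasFDerivAt

lemma hasFDerivAt_dy {f : ℝ × ℝ → ℝ} (hf : ContDiffOn ℝ 2 f (closure Omg)) {p : ℝ × ℝ}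
    (hp : p ∈ Omg) :
    HasFDerivAt (dy f) (fderivWithin ℝ (dy f) (closure Omg) p) p := by
  rw [fderivWithin_of_mem_nhds (nhds_closure hp)]
  exact (diffAt_dy hf hp).hasFDerivAt

lemma hasFDerivAt_f {f : ℝ × ℝ → ℝ} (hf : ContDiffOn ℝ 2 f (closure Omg)) {p : ℝ × ℝ}
    (hp : p ∈ Omg) :
    HasFDerivAt f (fderivWithin ℝ f (closure Omg) p) p := by
  rw [fderivWithin_of_mem_nhds (nhds_closure hp)]
  exact ((hf.contDiffAt (nhds_closure hp)).differentiableAt (by norm_num)).hasFDerivAt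

lemma lap_eq {f : ℝ × ℝ → ℝ} {p : ℝ × ℝ} (hp : p ∈ Omg) :
    lap f p = dx (dx f) p + dy (dy f) p := by
  have h1 : px (px f) p = dx (dx f) p := by
    show fderiv ℝ (px f) p (1,0) = fderivWithin ℝ (dx f) (closure Omg) p (1,0)
    rw [fderivWithin_of_mem_nhds (nhds_closure hp)]
    congr 1
    exact (ev_px_dx (f := f) hp).fderiv_eq
  have h2 : py (py f) p = dy (dy f) p := by
    show fderiv ℝ (py f) p (0,1) = fderivWithin ℝ (dy f) (closure Omg) p (0,1)
    rw [fderivWithin_of_mem_nhds (nhds_closure hp)]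
    congr 1
    exact (ev_py_dy (f := f) hp).fderiv_eq
  rw [lap, h1, h2]

lemma continuousOn_ddx {f : ℝ × ℝ → ℝ} (hf : ContDiffOn ℝ 2 f (closure Omg)) :
    ContinuousOn (fun q => fderivWithin ℝ (dx f) (closure Omg) q (1,0)) (closure Omg) :=
  ((contDiffOn_dx hf).continuousOn_fderivWithin uniqueDiffOn_closure_Omg le_rfl).clm_apply
    continuousOn_const

lemma continuousOn_ddy {f : ℝ × ℝ → ℝ} (hf : ContDiffOn ℝ 2 f (closure Omg)) :
    ContinuousOn (fun q => fderivWithin ℝ (dy f) (closure Omg) q (0,1)) (closure Omg) :=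
  ((contDiffOn_dy hf).continuousOn_fderivWithin uniqueDiffOn_closure_Omg le_rfl).clm_apply
    continuousOn_const

lemma ddx_eq {f : ℝ × ℝ → ℝ} (q : ℝ × ℝ) :
    fderivWithin ℝ (dx f) (closure Omg) q (1,0) = dx (dx f) q := rfl

lemma ddy_eq {f : ℝ × ℝ → ℝ} (q : ℝ × ℝ) :
    fderivWithin ℝ (dy f) (closure Omg) q (0,1) = dy (dy f) q := rfl

lemma green {f : ℝ × ℝ → ℝ} (hf : ContDiffOn ℝ 2 f (closure Omg))
    (hfb : ∀ p ∈ frontier Omg, f p = 0) :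
    ∫ p in Omg, f p * (dx (dx f) p + dy (dy f) p)
      = - ∫ p in Omg, (dx f p ^ 2 + dy f p ^ 2) := by
  set S := closure Omg with hS
  set F : ℝ × ℝ → ℝ := fun q => f q * dx f q with hF
  set G : ℝ × ℝ → ℝ := fun q => f q * dy f q with hG
  set F' : ℝ × ℝ → (ℝ × ℝ →L[ℝ] ℝ) :=
    fun q => f q • fderivWithin ℝ (dx f) S q + dx f q • fderivWithin ℝ f S q with hF'
  set G' : ℝ × ℝ → (ℝ × ℝ →L[ℝ] ℝ) :=
    fun q => f q • fderivWithin ℝ (dy f) S q + dy f q • fderivWithin ℝ f S q with hG'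
  have hab : ((0,0) : ℝ × ℝ) ≤ (1,1) := by constructor <;> norm_num
  have hIcc : Icc ((0,0) : ℝ × ℝ) (1,1) = S := closure_Omg.symm
  have hdom : Ioo ((0,0):ℝ×ℝ).1 ((1,1):ℝ×ℝ).1 ×ˢ Ioo ((0,0):ℝ×ℝ).2 ((1,1):ℝ×ℝ).2
      \ (∅ : Set (ℝ×ℝ)) = Omg := by simp [Omg]
  have hcf : ContinuousOn f S := hf.continuousOn
  have hcdx : ContinuousOn (dx f) S := (contDiffOn_dx hf).continuousOn
  have hcdy : ContinuousOn (dy f) S := (contDiffOn_dy hf).continuousOn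
  -- the divergence theorem
  have hdiv := integral_divergence_prod_Icc_of_hasFDerivAt_off_countable_of_le
      F G F' G' (0,0) (1,1) hab ∅ countable_empty
      (by rw [hIcc]; exact hcf.mul hcdx)
      (by rw [hIcc]; exact hcf.mul hcdy)
      (by
        rw [hdom]
        intro p hp
        exact (hasFDerivAt_f hf hp).mul (hasFDerivAt_dx hf hp))
      (by
        rw [hdom]
        intro p hp
        exact (hasFDerivAt_f hf hp).mul (hasFDerivAt_dy hf hp))
      (by
        rw [hIcc]
        have hcont : ContinuousOn (fun q => F' q (1,0) + G' q (0,1)) S := by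
          have h1 : ContinuousOn (fun q => fderivWithin ℝ (dx f) S q (1,0)) S :=
            continuousOn_ddx hf
          have h2 : ContinuousOn (fun q => fderivWithin ℝ (dy f) S q (0,1)) S :=
            continuousOn_ddy hf
          have e : (fun q => F' q (1,0) + G' q (0,1)) =
              (fun q => (f q * fderivWithin ℝ (dx f) S q (1,0) + dx f q * dx f q)
                + (f q * fderivWithin ℝ (dy f) S q (0,1) + dy f q * dy f q)) := by
            funext q
            simp [hF', hG', dx, dy, hS]
          rw [e]
          exact ((hcf.mul h1).add (hcdx.mul hcdx)).add ((hcf.mul h2).add (hcdy.mul hcdy))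
        exact hcont.integrableOn_compact (hIcc ▸ isCompact_Icc) |>.mono_set le_rfl)
  -- boundary terms vanish
  have hbdry : ∀ z : ℝ × ℝ, z ∈ S → z ∉ Omg → f z = 0 := fun z h1 h2 =>
    hfb z (mem_frontier_Omg h1 h2)
  have hG1 : (∫ x in (0:ℝ)..1, G (x, 1)) = 0 := by
    rw [intervalIntegral.integral_congr (g := fun _ => (0:ℝ))
      (fun x hx => ?_), intervalIntegral.integral_const, smul_zero]
    have hx' : x ∈ Icc (0:ℝ) 1 := by simpa using hx
    have : (x, (1:ℝ)) ∈ S := by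
      rw [← hIcc, Icc_prod_eq]; exact ⟨hx', by norm_num⟩
    simp [hG, hbdry (x,1) this (by simp [Omg])]
  have hG0 : (∫ x in (0:ℝ)..1, G (x, 0)) = 0 := by
    rw [intervalIntegral.integral_congr (g := fun _ => (0:ℝ))
      (fun x hx => ?_), intervalIntegral.integral_const, smul_zero]
    have hx' : x ∈ Icc (0:ℝ) 1 := by simpa using hx
    have : (x, (0:ℝ)) ∈ S := by
      rw [← hIcc, Icc_prod_eq]; exact ⟨hx', by norm_num⟩
    simp [hG, hbdry (x,0) this (by simp [Omg])]
  have hF1 : (∫ y in (0:ℝ)..1, F (1, y)) = 0 := by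
    rw [intervalIntegral.integral_congr (g := fun _ => (0:ℝ))
      (fun y hy => ?_), intervalIntegral.integral_const, smul_zero]
    have hy' : y ∈ Icc (0:ℝ) 1 := by simpa using hy
    have : ((1:ℝ), y) ∈ S := by
      rw [← hIcc, Icc_prod_eq]; exact ⟨by norm_num, hy'⟩
    simp [hF, hbdry (1,y) this (by simp [Omg])]
  have hF0 : (∫ y in (0:ℝ)..1, F (0, y)) = 0 := by
    rw [intervalIntegral.integral_congr (g := fun _ => (0:ℝ))
      (fun y hy => ?_), intervalIntegral.integral_const, smul_zero]
    have hy' : y ∈ Icc (0:ℝ) 1 := by simpa using hy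
    have : ((0:ℝ), y) ∈ S := by
      rw [← hIcc, Icc_prod_eq]; exact ⟨by norm_num, hy'⟩
    simp [hF, hbdry (0,y) this (by simp [Omg])]
  rw [hG1, hG0, hF1, hF0] at hdiv
  simp only [sub_zero, add_zero, sub_self, zero_add] at hdiv
  -- hdiv : ∫ p in Icc (0,0) (1,1), F' p (1,0) + G' p (0,1) = 0
  have hOmg0 : ∫ p in Omg, (F' p (1,0) + G' p (0,1)) = 0 := by
    rw [← setInt_Icc_eq]; exact hdiv
  have hptwise : (fun q => F' q (1,0) + G' q (0,1)) =
      fun q => (f q * (dx (dx f) q + dy (dy f) q)) + (dx f q ^ 2 + dy f q ^ 2) := by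
    funext q
    have e1 : fderivWithin ℝ f S q (1,0) = dx f q := rfl
    have e2 : fderivWithin ℝ f S q (0,1) = dy f q := rfl
    have e3 : (fderivWithin ℝ (dx f) S q) (1,0) = dx (dx f) q := rfl
    have e4 : (fderivWithin ℝ (dy f) S q) (0,1) = dy (dy f) q := rfl
    simp only [hF', hG', ContinuousLinearMap.add_apply, ContinuousLinearMap.coe_smul',
      Pi.smul_apply, smul_eq_mul, e1, e2, e3, e4]
    ring
  rw [hptwise] at hOmg0
  have hu : IntegrableOn (fun q => f q * (dx (dx f) q + dy (dy f) q)) Omg volume := by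
    refine integrableOn_Omg (hcf.mul ?_)
    have := (continuousOn_ddx hf).add (continuousOn_ddy hf)
    exact this
  have hv : IntegrableOn (fun q => dx f q ^ 2 + dy f q ^ 2) Omg volume :=
    integrableOn_Omg (((hcdx.pow 2).add (hcdy.pow 2)))
  rw [MeasureTheory.integral_add hu hv] at hOmg0
  linarith

instance : IsFiniteMeasure (volume.restrict Omg) := by
  constructor
  rw [Measure.restrict_apply_univ]
  exact lt_of_le_of_lt (measure_mono subset_closure) isCompact_closure_Omg.measure_lt_top

lemma memL2 {u : ℝ × ℝ → ℝ} (hu : ContinuousOn u (closure Omg)) :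
    MemLp u (ENNReal.ofReal 2) (volume.restrict Omg) := by
  obtain ⟨M, hM⟩ := isCompact_closure_Omg.exists_bound_of_continuousOn hu
  refine MemLp.of_bound
    ((hu.mono subset_closure).aestronglyMeasurable measurableSet_Omg) M ?_
  exact (ae_restrict_iff' measurableSet_Omg).mpr
    (ae_of_all _ fun p hp => hM p (subset_closure hp))

lemma CS {u v : ℝ × ℝ → ℝ} (hu : ContinuousOn u (closure Omg))
    (hv : ContinuousOn v (closure Omg)) :
    ∫ p in Omg, u p * v p
      ≤ Real.sqrt (∫ p in Omg, u p ^ 2) * Real.sqrt (∫ p in Omg, v p ^ 2) := by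
  have habs : ∫ p in Omg, u p * v p ≤ ∫ p in Omg, |u p| * |v p| := by
    refine setIntegral_mono_on (integrableOn_Omg (hu.mul hv))
      (integrableOn_Omg (hu.abs.mul hv.abs)) measurableSet_Omg fun p _ => ?_
    calc u p * v p ≤ |u p * v p| := le_abs_self _
    _ = |u p| * |v p| := abs_mul _ _
  have hconj : (2:ℝ).HolderConjugate 2 := ⟨by norm_num, by norm_num, by norm_num⟩
  have h2 := integral_mul_le_Lp_mul_Lq_of_nonneg hconj
    (ae_of_all _ fun p => abs_nonneg (u p)) (ae_of_all _ fun p => abs_nonneg (v p))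
    (memL2 hu.abs) (memL2 hv.abs)
  have e : ∀ w : ℝ × ℝ → ℝ, (∫ p in Omg, |w p| ^ (2:ℝ)) = ∫ p in Omg, w p ^ 2 := by
    intro w
    refine setIntegral_congr_fun measurableSet_Omg fun p _ => ?_
    rw [show ((2:ℝ)) = ((2:ℕ):ℝ) by norm_num, Real.rpow_natCast, sq_abs]
  rw [e u, e v] at h2
  calc ∫ p in Omg, u p * v p ≤ ∫ p in Omg, |u p| * |v p| := habs
  _ ≤ (∫ p in Omg, u p ^ 2) ^ ((1:ℝ)/2) * (∫ p in Omg, v p ^ 2) ^ ((1:ℝ)/2) := h2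
  _ = _ := by rw [Real.sqrt_eq_rpow, Real.sqrt_eq_rpow]

lemma CS' {u v : ℝ × ℝ → ℝ} (hu : ContinuousOn u (closure Omg))
    (hv : ContinuousOn v (closure Omg)) {a b : ℝ} (ha : 0 ≤ a) (hb : 0 ≤ b)
    (h1 : (∫ p in Omg, u p ^ 2) ≤ a ^ 2) (h2 : (∫ p in Omg, v p ^ 2) ≤ b ^ 2) :
    ∫ p in Omg, u p * v p ≤ a * b := by
  refine (CS hu hv).trans (mul_le_mul ?_ ?_ (Real.sqrt_nonneg _) ha)
  · exact (Real.sqrt_le_sqrt h1).trans_eq (Real.sqrt_sq ha)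
  · exact (Real.sqrt_le_sqrt h2).trans_eq (Real.sqrt_sq hb)

lemma Lnorm_two_eq (f : ℝ × ℝ → ℝ) : Lnorm f 2 = Real.sqrt (∫ p in Omg, f p ^ 2) := by
  rw [Lnorm, Real.sqrt_eq_rpow]
  congr 1
  refine setIntegral_congr_fun measurableSet_Omg fun p _ => ?_
  rw [show ((2:ℝ)) = ((2:ℕ):ℝ) by norm_num, Real.rpow_natCast, sq_abs]

lemma gradNorm_eq {f : ℝ × ℝ → ℝ} :
    gradNorm f = Real.sqrt (∫ p in Omg, (dx f p ^ 2 + dy f p ^ 2)) := by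
  rw [gradNorm, Real.sqrt_eq_rpow]
  congr 1
  refine setIntegral_congr_fun measurableSet_Omg fun p hp => ?_
  rw [px_eq hp, py_eq hp, sq_abs, sq_abs]

lemma continuousOn_lapw {f : ℝ × ℝ → ℝ} (hf : ContDiffOn ℝ 2 f (closure Omg)) :
    ContinuousOn (fun q => dx (dx f) q + dy (dy f) q) (closure Omg) := by
  exact (continuousOn_ddx hf).add (continuousOn_ddy hf)

lemma int_sq_abs (u : ℝ × ℝ → ℝ) :
    (∫ p in Omg, |u p| ^ 2) = ∫ p in Omg, u p ^ 2 := by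
  refine setIntegral_congr_fun measurableSet_Omg fun p _ => sq_abs _


lemma final_alg {x y F1 F2 C Ra r L : ℝ} (hx0 : 0 ≤ x) (hy0 : 0 ≤ y)
    (hF10 : 0 ≤ F1) (hF20 : 0 ≤ F2) (hC0 : 0 < C) (hC1 : C ≤ 1)
    (hRa : 0 < Ra) (hr : 0 < r) (hL : 0 < L)
    (h1 : x^2 ≤ F1*(C*x) + Ra*(y*(C*x)))
    (h2 : y^2 ≤ F2*(C*y) + r*(x*(C*y) + y*(C*y)))
    (hA : L ≤ 1/2 - C*r/2 - C*Ra/2) (hB : L ≤ 1/2 - Ra/2 - 3*r*C/2) :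
    (x^2 + y^2) * (2*L) ≤ C^2 * (F1^2 + F2^2) := by
  have e1 : x^2*(2*L) ≤ x^2*(1 - C*r - C*Ra) := by
    nlinarith [mul_nonneg (sq_nonneg x) (by linarith : (0:ℝ) ≤ 1 - C*r - C*Ra - 2*L)]
  have e2 : y^2*(2*L) ≤ y^2*(1 - Ra - 3*r*C) := by
    nlinarith [mul_nonneg (sq_nonneg y) (by linarith : (0:ℝ) ≤ 1 - Ra - 3*r*C - 2*L)]
  have young1 : 2*(F1*(C*x)) ≤ C^2*F1^2 + x^2 := by nlinarith [sq_nonneg (C*F1 - x)]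
  have young2 : 2*(F2*(C*y)) ≤ C^2*F2^2 + y^2 := by nlinarith [sq_nonneg (C*F2 - y)]
  have young3 : 2*(y*(C*x)) ≤ C*x^2 + C*y^2 := by
    nlinarith [mul_nonneg hC0.le (sq_nonneg (x - y))]
  have young4 : 2*(x*(C*y)) ≤ C*x^2 + C*y^2 := by
    nlinarith [mul_nonneg hC0.le (sq_nonneg (x - y))]
  have m1 : Ra*(2*(y*(C*x))) ≤ Ra*(C*x^2 + C*y^2) :=
    mul_le_mul_of_nonneg_left young3 hRa.le
  have m2 : r*(2*(x*(C*y))) ≤ r*(C*x^2 + C*y^2) :=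
    mul_le_mul_of_nonneg_left young4 hr.le
  have k1 : 2*x^2 ≤ C^2*F1^2 + x^2 + Ra*(C*x^2 + C*y^2) := by linarith [h1, young1, m1]
  have k2 : 2*y^2 ≤ C^2*F2^2 + y^2 + r*(C*x^2 + C*y^2) + 2*(r*(C*y^2)) := by
    linarith [h2, young2, m2]
  have m3 : 0 ≤ Ra*(1 - C)*y^2 :=
    mul_nonneg (mul_nonneg hRa.le (by linarith)) (sq_nonneg y)
  linarith [e1, e2, k1, k2, m3]

set_option maxHeartbeats 1000000 in
/-- Stability estimate: the solution depends continuously on the source terms. -/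
theorem stmt_10 (Ra R C : ℝ) (hRa : 0 < Ra) (hR : 0 < R) (hC0 : 0 < C) (hC1 : C ≤ 1)
    (hPoincare : ∀ v : ℝ × ℝ → ℝ, ContDiffOn ℝ 1 v (closure Omg) →
      (∀ p ∈ frontier Omg, v p = 0) → Lnorm v 2 ≤ C * gradNorm v)
    (ψ θ f₁ f₂ : ℝ × ℝ → ℝ)
    (hψ : ContDiffOn ℝ 2 ψ (closure Omg)) (hθ : ContDiffOn ℝ 2 θ (closure Omg))
    (hψb : ∀ p ∈ frontier Omg, ψ p = 0) (hθb : ∀ p ∈ frontier Omg, θ p = 0)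
    (hf₁ : ContinuousOn f₁ (closure Omg)) (hf₂ : ContinuousOn f₂ (closure Omg))
    (heq1 : ∀ p ∈ Omg, -(lap ψ p) - Ra * px θ p = f₁ p)
    (heq2 : ∀ p ∈ Omg, Jac ψ θ p = lap θ p + f₂ p)
    (hbd : ∀ p ∈ Omg, |px ψ p| ≤ R / Real.sqrt 2 ∧ |py ψ p| ≤ R / Real.sqrt 2 ∧
      |px θ p| ≤ R / Real.sqrt 2 ∧ |py θ p| ≤ R / Real.sqrt 2)
    (L : ℝ)
    (hLdef : L = min (1 / 2 - C * R / (2 * Real.sqrt 2) - C * Ra / 2)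
      (1 / 2 - Ra / 2 - 3 * R * C / (2 * Real.sqrt 2)))
    (hL : 0 < L) :
    gradNorm ψ ^ 2 + gradNorm θ ^ 2
      ≤ (C ^ 2 / (2 * L)) * (Lnorm f₁ 2 ^ 2 + Lnorm f₂ 2 ^ 2) := by
  have hs0 : (0:ℝ) < Real.sqrt 2 := by positivity
  set r : ℝ := R / Real.sqrt 2 with hrdef
  have hr0 : 0 < r := by positivity
  -- continuity facts
  have hψc : ContinuousOn ψ (closure Omg) := hψ.continuousOn
  have hθc : ContinuousOn θ (closure Omg) := hθ.continuousOn
  have hdxψc : ContinuousOn (dx ψ) (closure Omg) := (contDiffOn_dx hψ).continuousOn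
  have hdyψc : ContinuousOn (dy ψ) (closure Omg) := (contDiffOn_dy hψ).continuousOn
  have hdxθc : ContinuousOn (dx θ) (closure Omg) := (contDiffOn_dx hθ).continuousOn
  have hdyθc : ContinuousOn (dy θ) (closure Omg) := (contDiffOn_dy hθ).continuousOn
  -- the Dirichlet energies
  have hX0 : 0 ≤ ∫ p in Omg, (dx ψ p ^ 2 + dy ψ p ^ 2) :=
    setIntegral_nonneg measurableSet_Omg fun p _ => by positivity
  have hY0 : 0 ≤ ∫ p in Omg, (dx θ p ^ 2 + dy θ p ^ 2) :=
    setIntegral_nonneg measurableSet_Omg fun p _ => by positivity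
  have hx0 : 0 ≤ gradNorm ψ := by rw [gradNorm_eq]; exact Real.sqrt_nonneg _
  have hy0 : 0 ≤ gradNorm θ := by rw [gradNorm_eq]; exact Real.sqrt_nonneg _
  have hx2 : gradNorm ψ ^ 2 = ∫ p in Omg, (dx ψ p ^ 2 + dy ψ p ^ 2) := by
    rw [gradNorm_eq, Real.sq_sqrt hX0]
  have hy2 : gradNorm θ ^ 2 = ∫ p in Omg, (dx θ p ^ 2 + dy θ p ^ 2) := by
    rw [gradNorm_eq, Real.sq_sqrt hY0]
  have hF₁0 : 0 ≤ Lnorm f₁ 2 := by rw [Lnorm_two_eq]; exact Real.sqrt_nonneg _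
  have hF₂0 : 0 ≤ Lnorm f₂ 2 := by rw [Lnorm_two_eq]; exact Real.sqrt_nonneg _
  have hF₁2 : Lnorm f₁ 2 ^ 2 = ∫ p in Omg, f₁ p ^ 2 := by
    rw [Lnorm_two_eq, Real.sq_sqrt (setIntegral_nonneg measurableSet_Omg fun p _ => sq_nonneg _)]
  have hF₂2 : Lnorm f₂ 2 ^ 2 = ∫ p in Omg, f₂ p ^ 2 := by
    rw [Lnorm_two_eq, Real.sq_sqrt (setIntegral_nonneg measurableSet_Omg fun p _ => sq_nonneg _)]
  -- Poincaré
  have hPψ : Lnorm ψ 2 ≤ C * gradNorm ψ := hPoincare ψ (hψ.of_le (by norm_num)) hψb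
  have hPθ : Lnorm θ 2 ≤ C * gradNorm θ := hPoincare θ (hθ.of_le (by norm_num)) hθb
  have hψsq : (∫ p in Omg, ψ p ^ 2) ≤ (C * gradNorm ψ) ^ 2 := by
    rw [← Real.sq_sqrt (setIntegral_nonneg measurableSet_Omg
      (fun p _ => sq_nonneg (ψ p))), ← Lnorm_two_eq]
    exact pow_le_pow_left₀ (by rw [Lnorm_two_eq]; exact Real.sqrt_nonneg _) hPψ 2
  have hθsq : (∫ p in Omg, θ p ^ 2) ≤ (C * gradNorm θ) ^ 2 := by
    rw [← Real.sq_sqrt (setIntegral_nonneg measurableSet_Omg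
      (fun p _ => sq_nonneg (θ p))), ← Lnorm_two_eq]
    exact pow_le_pow_left₀ (by rw [Lnorm_two_eq]; exact Real.sqrt_nonneg _) hPθ 2
  -- partial-energy bounds
  have hdxψsq : (∫ p in Omg, dx ψ p ^ 2) ≤ gradNorm ψ ^ 2 := by
    rw [hx2]
    refine setIntegral_mono_on (integrableOn_Omg (hdxψc.pow 2))
      (integrableOn_Omg ((hdxψc.pow 2).add (hdyψc.pow 2))) measurableSet_Omg
      fun p _ => le_add_of_nonneg_right (sq_nonneg _)
  have hdxθsq : (∫ p in Omg, dx θ p ^ 2) ≤ gradNorm θ ^ 2 := by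
    rw [hy2]
    refine setIntegral_mono_on (integrableOn_Omg (hdxθc.pow 2))
      (integrableOn_Omg ((hdxθc.pow 2).add (hdyθc.pow 2))) measurableSet_Omg
      fun p _ => le_add_of_nonneg_right (sq_nonneg _)
  -- Identity 1
  have hgψ := green hψ hψb
  have hI1 : (∫ p in Omg, f₁ p * ψ p)
      = (∫ p in Omg, (dx ψ p ^ 2 + dy ψ p ^ 2)) - Ra * ∫ p in Omg, dx θ p * ψ p := by
    have hpt : EqOn (fun p => f₁ p * ψ p)
        (fun p => -(ψ p * (dx (dx ψ) p + dy (dy ψ) p)) - Ra * (dx θ p * ψ p)) Omg := by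
      intro p hp
      have h := heq1 p hp
      rw [lap_eq hp, px_eq hp] at h
      simp only
      rw [← h]; ring
    rw [setIntegral_congr_fun measurableSet_Omg hpt,
      MeasureTheory.integral_sub (integrableOn_Omg (u := fun p => -(ψ p * (dx (dx ψ) p + dy (dy ψ) p))) ((hψc.mul (continuousOn_lapw hψ)).neg))
        ((integrableOn_Omg (u := fun p => dx θ p * ψ p) (hdxθc.mul hψc)).const_mul Ra),
      MeasureTheory.integral_neg, hgψ, MeasureTheory.integral_const_mul Ra]
    ring
  -- Identity 2
  have hgθ := green hθ hθb
  have hJw : ContinuousOn (fun p => dx ψ p * dy θ p - dy ψ p * dx θ p) (closure Omg) :=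
    (hdxψc.mul hdyθc).sub (hdyψc.mul hdxθc)
  have hI2 : (∫ p in Omg, f₂ p * θ p)
      = (∫ p in Omg, (dx ψ p * dy θ p - dy ψ p * dx θ p) * θ p)
        + ∫ p in Omg, (dx θ p ^ 2 + dy θ p ^ 2) := by
    have hpt : EqOn (fun p => f₂ p * θ p)
        (fun p => (dx ψ p * dy θ p - dy ψ p * dx θ p) * θ p
          - θ p * (dx (dx θ) p + dy (dy θ) p)) Omg := by
      intro p hp
      have h := heq2 p hp
      rw [lap_eq hp, Jac, px_eq hp, py_eq hp, px_eq hp, py_eq hp] at h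
      simp only
      have hf2 : f₂ p = (dx ψ p * dy θ p - dy ψ p * dx θ p)
          - (dx (dx θ) p + dy (dy θ) p) := by linarith
      rw [hf2]; ring
    rw [setIntegral_congr_fun measurableSet_Omg hpt,
      MeasureTheory.integral_sub (integrableOn_Omg (u := fun p => (dx ψ p * dy θ p - dy ψ p * dx θ p) * θ p) (hJw.mul hθc))
        (integrableOn_Omg (u := fun p => θ p * (dx (dx θ) p + dy (dy θ) p)) (hθc.mul (continuousOn_lapw hθ))), hgθ]
    ring
  -- Estimates
  have hE1 : (∫ p in Omg, f₁ p * ψ p) ≤ Lnorm f₁ 2 * (C * gradNorm ψ) :=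
    CS' hf₁ hψc hF₁0 (by positivity) hF₁2.ge hψsq
  have hE3 : (∫ p in Omg, f₂ p * θ p) ≤ Lnorm f₂ 2 * (C * gradNorm θ) :=
    CS' hf₂ hθc hF₂0 (by positivity) hF₂2.ge hθsq
  have hE2 : (∫ p in Omg, dx θ p * ψ p) ≤ gradNorm θ * (C * gradNorm ψ) :=
    CS' hdxθc hψc hy0 (by positivity) hdxθsq hψsq
  have hCS1 : (∫ p in Omg, |dx ψ p| * |θ p|) ≤ gradNorm ψ * (C * gradNorm θ) := by
    refine CS' hdxψc.abs hθc.abs hx0 (by positivity) ?_ ?_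
    · rw [int_sq_abs]; exact hdxψsq
    · rw [int_sq_abs]; exact hθsq
  have hCS2 : (∫ p in Omg, |dx θ p| * |θ p|) ≤ gradNorm θ * (C * gradNorm θ) := by
    refine CS' hdxθc.abs hθc.abs hy0 (by positivity) ?_ ?_
    · rw [int_sq_abs]; exact hdxθsq
    · rw [int_sq_abs]; exact hθsq
  have hE4 : -(∫ p in Omg, (dx ψ p * dy θ p - dy ψ p * dx θ p) * θ p)
      ≤ r * (gradNorm ψ * (C * gradNorm θ) + gradNorm θ * (C * gradNorm θ)) := by
    rw [← MeasureTheory.integral_neg]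
    have step : (∫ p in Omg, -((dx ψ p * dy θ p - dy ψ p * dx θ p) * θ p))
        ≤ ∫ p in Omg, r * (|dx ψ p| * |θ p| + |dx θ p| * |θ p|) := by
      refine setIntegral_mono_on (integrableOn_Omg ((hJw.mul hθc).neg))
        (integrableOn_Omg (continuousOn_const.mul ((hdxψc.abs.mul hθc.abs).add
          (hdxθc.abs.mul hθc.abs)))) measurableSet_Omg fun p hp => ?_
      obtain ⟨b1, b2, b3, b4⟩ := hbd p hp
      rw [px_eq hp] at b1 b3
      rw [py_eq hp] at b2 b4
      have h1 : -((dx ψ p * dy θ p - dy ψ p * dx θ p) * θ p)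
          ≤ |dx ψ p * dy θ p - dy ψ p * dx θ p| * |θ p| := by
        rw [← abs_mul]; exact neg_le_abs _
      have h2 : |dx ψ p * dy θ p - dy ψ p * dx θ p| ≤ r * |dx ψ p| + r * |dx θ p| := by
        calc |dx ψ p * dy θ p - dy ψ p * dx θ p|
            ≤ |dx ψ p * dy θ p| + |dy ψ p * dx θ p| := abs_sub _ _
        _ = |dx ψ p| * |dy θ p| + |dy ψ p| * |dx θ p| := by rw [abs_mul, abs_mul]
        _ ≤ |dx ψ p| * r + r * |dx θ p| := by
            refine add_le_add (mul_le_mul_of_nonneg_left b4 (abs_nonneg _))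
              (mul_le_mul_of_nonneg_right b2 (abs_nonneg _))
        _ = r * |dx ψ p| + r * |dx θ p| := by ring
      calc -((dx ψ p * dy θ p - dy ψ p * dx θ p) * θ p)
          ≤ |dx ψ p * dy θ p - dy ψ p * dx θ p| * |θ p| := h1
      _ ≤ (r * |dx ψ p| + r * |dx θ p|) * |θ p| :=
          mul_le_mul_of_nonneg_right h2 (abs_nonneg _)
      _ = r * (|dx ψ p| * |θ p| + |dx θ p| * |θ p|) := by ring
    refine step.trans ?_
    rw [MeasureTheory.integral_const_mul r,
      MeasureTheory.integral_add (integrableOn_Omg (u := fun p => |dx ψ p| * |θ p|) (hdxψc.abs.mul hθc.abs))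
        (integrableOn_Omg (u := fun p => |dx θ p| * |θ p|) (hdxθc.abs.mul hθc.abs))]
    exact mul_le_mul_of_nonneg_left (add_le_add hCS1 hCS2) hr0.le
  -- combine
  have hXb : gradNorm ψ ^ 2 ≤ Lnorm f₁ 2 * (C * gradNorm ψ)
      + Ra * (gradNorm θ * (C * gradNorm ψ)) := by
    have := mul_le_mul_of_nonneg_left hE2 hRa.le
    rw [hx2]
    linarith [hE1, hI1]
  have hYb : gradNorm θ ^ 2 ≤ Lnorm f₂ 2 * (C * gradNorm θ)
      + r * (gradNorm ψ * (C * gradNorm θ) + gradNorm θ * (C * gradNorm θ)) := by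
    rw [hy2]
    linarith [hE3, hE4, hI2]
  -- final algebra
  have hA : L ≤ 1 / 2 - C * r / 2 - C * Ra / 2 := by
    have := hLdef ▸ min_le_left (1 / 2 - C * R / (2 * Real.sqrt 2) - C * Ra / 2)
      (1 / 2 - Ra / 2 - 3 * R * C / (2 * Real.sqrt 2))
    have e : C * R / (2 * Real.sqrt 2) = C * r / 2 := by
      rw [hrdef]; field_simp
    linarith [e ▸ this]
  have hB : L ≤ 1 / 2 - Ra / 2 - 3 * r * C / 2 := by
    have := hLdef ▸ min_le_right (1 / 2 - C * R / (2 * Real.sqrt 2) - C * Ra / 2)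
      (1 / 2 - Ra / 2 - 3 * R * C / (2 * Real.sqrt 2))
    have e : 3 * R * C / (2 * Real.sqrt 2) = 3 * r * C / 2 := by
      rw [hrdef]; field_simp
    linarith [e ▸ this]
  rw [div_mul_eq_mul_div, le_div_iff₀ (by positivity : (0:ℝ) < 2 * L)]
  exact final_alg hx0 hy0 hF₁0 hF₂0 hC0 hC1 hRa hr0 hL hXb hYb hA hB
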